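/- arXiv:1803.03970 — 4 statements merged into one kernel-verified Lean document; each statement's English description precedes it below -/
import Mathlib

section
/- Let f : ℝ → ℝ be causal, i.e. f(t) = 0 for all t < 0, and let α₁, α₂ ≥ 0 be real numbers. Then for every t ∈ ℝ the generalized finite difference operators satisfy the composition property Δ^{α₁}(Δ^{α₂} f)(t) = Δ^{α₁+α₂} f(t); all sums involved have only finitely many nonzero terms because f is causal (only indices k with t − k ≥ 0 contribute). -/
/-- Generalized binomial coefficient: binom(α, k) = (∏_{i=0}^{k-1} (α - i)) / k!. -/
noncomputable def gbinom (x : ℝ) (k : ℕ) : ℝ :=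
  (∏ i ∈ Finset.range k, (x - i)) / k.factorial

/-- Generalized finite difference operator:
Δ^α f(t) := ∑_{k∈ℕ} (−1)^k binom(α, k) f(t − k). -/
noncomputable def gdiff (α : ℝ) (f : ℝ → ℝ) (t : ℝ) : ℝ :=
  ∑' k : ℕ, (-1 : ℝ) ^ k * gbinom α k * f (t - k)

open Polynomial Finset

lemma descPochhammer_smeval_real (k : ℕ) (x : ℝ) :
    (descPochhammer ℤ k).smeval x = ∏ i ∈ Finset.range k, (x - i) := by
  induction k with
  | zero => simp [descPochhammer_zero, smeval_one]
  | succ k ih =>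
    rw [descPochhammer_succ_right, smeval_mul, ih, Finset.prod_range_succ, smeval_sub,
      smeval_X, smeval_natCast]
    simp

lemma gbinom_eq_choose (x : ℝ) (k : ℕ) : gbinom x k = Ring.choose x k := by
  have h := Ring.descPochhammer_eq_factorial_smul_choose x k
  rw [descPochhammer_smeval_real, nsmul_eq_mul] at h
  rw [gbinom, h, mul_comm, mul_div_assoc, div_self, mul_one]
  exact_mod_cast (Nat.factorial_ne_zero k)

lemma gbinom_add (α β : ℝ) (n : ℕ) :
    gbinom (α + β) n = ∑ ij ∈ Finset.HasAntidiagonal.antidiagonal n, gbinom α ij.1 * gbinom β ij.2 := by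
  simp only [gbinom_eq_choose]
  exact Ring.add_choose_eq n (Commute.all α β)


/-- Composition property of the generalized finite difference operator for causal
functions: Δ^{α₁}(Δ^{α₂} f)(t) = Δ^{α₁+α₂} f(t). -/
theorem gdiff_comp (f : ℝ → ℝ) (hf : ∀ t < (0 : ℝ), f t = 0)
    (α₁ α₂ : ℝ) (hα₁ : 0 ≤ α₁) (hα₂ : 0 ≤ α₂) (t : ℝ) :
    gdiff α₁ (gdiff α₂ f) t = gdiff (α₁ + α₂) f t := by
  set N := ⌊t⌋₊ + 1 with hNdef
  have key : ∀ n : ℕ, N ≤ n → t - (n : ℝ) < 0 := by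
    intro n hn
    rcases lt_or_ge t 0 with ht | ht
    · have : (0:ℝ) ≤ n := n.cast_nonneg
      linarith
    · have h1 : t < (N : ℝ) := by
        have := Nat.lt_floor_add_one t
        push_cast [hNdef]
        push_cast at this
        linarith
      have h2 : (N : ℝ) ≤ n := by exact_mod_cast hn
      linarith
  have hc : ∀ j k : ℕ, t - (j : ℝ) - (k : ℝ) = t - ((j + k : ℕ) : ℝ) := by
    intro j k; push_cast; ring
  have hzero : ∀ n : ℕ, N ≤ n → f (t - (n : ℝ)) = 0 := fun n hn => hf _ (key n hn)
  -- inner sums are finite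
  have h2 : ∀ j : ℕ, gdiff α₂ f (t - (j : ℝ)) =
      ∑ k ∈ range N, (-1 : ℝ) ^ k * gbinom α₂ k * f (t - j - k) := by
    intro j
    refine tsum_eq_sum fun k hk => ?_
    rw [hc j k, hzero (j + k) (le_trans (by simpa using hk) (Nat.le_add_left k j)), mul_zero]
  have h1 : gdiff α₁ (gdiff α₂ f) t =
      ∑ j ∈ range N, (-1 : ℝ) ^ j * gbinom α₁ j * gdiff α₂ f (t - j) := by
    refine tsum_eq_sum fun j hj => ?_
    have hj' : N ≤ j := by simpa using hj
    have : gdiff α₂ f (t - (j : ℝ)) = 0 := by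
      rw [h2 j]
      refine Finset.sum_eq_zero fun k _ => ?_
      rw [hc j k, hzero (j + k) (le_trans hj' (Nat.le_add_right j k)), mul_zero]
    rw [this, mul_zero]
  have h3 : gdiff (α₁ + α₂) f t =
      ∑ n ∈ range (2 * N), (-1 : ℝ) ^ n * gbinom (α₁ + α₂) n * f (t - n) := by
    refine tsum_eq_sum fun n hn => ?_
    have hn' : N ≤ n := le_trans (Nat.le_mul_of_pos_left N two_pos) (by simpa using hn)
    rw [hzero n hn', mul_zero]
  -- the common double-sum form
  set G : ℕ × ℕ → ℝ := fun p =>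
    (-1 : ℝ) ^ (p.1 + p.2) * (gbinom α₁ p.1 * gbinom α₂ p.2) * f (t - ((p.1 + p.2 : ℕ) : ℝ))
    with hG
  have hGzero : ∀ p : ℕ × ℕ, N ≤ p.1 + p.2 → G p = 0 := by
    intro p hp; rw [hG]; simp only; rw [hzero _ hp, mul_zero]
  have lhs_eq : gdiff α₁ (gdiff α₂ f) t = ∑ p ∈ range N ×ˢ range N, G p := by
    rw [h1, Finset.sum_product]
    refine Finset.sum_congr rfl fun j _ => ?_
    rw [h2 j, Finset.mul_sum]
    refine Finset.sum_congr rfl fun k _ => ?_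
    rw [hG]; simp only
    rw [← hc j k, pow_add]; ring
  have square_eq : ∑ p ∈ range N ×ˢ range N, G p = ∑ p ∈ range (2*N) ×ˢ range (2*N), G p := by
    refine Finset.sum_subset ?_ ?_
    · exact Finset.product_subset_product
        (Finset.range_subset_range.mpr (by omega)) (Finset.range_subset_range.mpr (by omega))
    · intro p hp hp'
      simp only [Finset.mem_product, Finset.mem_range, not_and_or, not_lt] at hp'
      exact hGzero p (by omega)
  have rhs_eq : gdiff (α₁ + α₂) f t =
      ∑ n ∈ range (2*N), ∑ p ∈ Finset.HasAntidiagonal.antidiagonal n, G p := by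
    rw [h3]
    refine Finset.sum_congr rfl fun n _ => ?_
    rw [gbinom_add, Finset.mul_sum, Finset.sum_mul]
    refine Finset.sum_congr rfl fun p hp => ?_
    have hpn : p.1 + p.2 = n := Finset.HasAntidiagonal.mem_antidiagonal.mp hp
    simp only [hG, hpn]
  have hdisj : (↑(range (2*N)) : Set ℕ).PairwiseDisjoint Finset.HasAntidiagonal.antidiagonal := by
    intro a _ b _ hab
    simp only [Finset.disjoint_left]
    intro p hpa hpb
    exact hab ((Finset.HasAntidiagonal.mem_antidiagonal.mp hpa).symm.trans (Finset.HasAntidiagonal.mem_antidiagonal.mp hpb))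
  have biUnion_eq : ∑ n ∈ range (2*N), ∑ p ∈ Finset.HasAntidiagonal.antidiagonal n, G p =
      ∑ p ∈ (range (2*N)).biUnion Finset.HasAntidiagonal.antidiagonal, G p :=
    (Finset.sum_biUnion hdisj).symm
  have final : ∑ p ∈ (range (2*N)).biUnion Finset.HasAntidiagonal.antidiagonal, G p =
      ∑ p ∈ range (2*N) ×ˢ range (2*N), G p := by
    refine Finset.sum_subset ?_ ?_
    · intro p hp
      simp only [Finset.mem_biUnion, Finset.mem_range, Finset.HasAntidiagonal.mem_antidiagonal] at hp
      obtain ⟨n, hn, hpn⟩ := hp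
      simp only [Finset.mem_product, Finset.mem_range]
      omega
    · intro p hp hp'
      simp only [Finset.mem_biUnion, Finset.mem_range, Finset.HasAntidiagonal.mem_antidiagonal, not_exists,
        not_and] at hp'
      simp only [Finset.mem_product, Finset.mem_range] at hp
      have : 2*N ≤ p.1 + p.2 := by
        by_contra h
        exact hp' (p.1 + p.2) (by omega) rfl
      exact hGzero p (by omega)
  rw [lhs_eq, square_eq, rhs_eq, biUnion_eq, final]
end

section
/- Let α > 1 and 0 < γ < 1. Then for every t > 0 the Caputo fractional derivative of order γ of the fractional B-spline B_α is given by the explicit differentiation rule D^γ B_α(t) = Δ^{α+1} t_+^{α−γ} / Γ(α−γ+1); explicitly, (1/Γ(1−γ)) ∫₀ᵗ [ (α/Γ(α+1)) ∑_{k∈ℕ, k≤τ} (−1)^k binom(α+1, k) (τ−k)^{α−1} ] (t−τ)^{−γ} dτ = (1/Γ(α−γ+1)) ∑_{k∈ℕ, k≤t} (−1)^k binom(α+1, k) (t−k)^{α−γ}, where the inner finite sum is the pointwise derivative B_α′(τ). -/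
open intervalIntegral Real MeasureTheory

lemma real_beta (a b : ℝ) (ha : 0 < a) (hb : 0 < b) :
    ∫ x in (0:ℝ)..1, x ^ (a - 1) * (1 - x) ^ (b - 1)
      = Real.Gamma a * Real.Gamma b / Real.Gamma (a + b) := by
  have key : Complex.betaIntegral a b
      = ((∫ x in (0:ℝ)..1, x ^ (a - 1) * (1 - x) ^ (b - 1) : ℝ) : ℂ) := by
    rw [Complex.betaIntegral, ← integral_ofReal]
    refine intervalIntegral.integral_congr fun x hx => ?_
    rw [Set.uIcc_of_le zero_le_one] at hx
    rw [Complex.ofReal_mul, Complex.ofReal_cpow hx.1, Complex.ofReal_cpow (by linarith [hx.2])]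
    push_cast
    ring
  have h := Complex.Gamma_mul_Gamma_eq_betaIntegral
    (s := (a:ℂ)) (t := (b:ℂ)) (by simpa using ha) (by simpa using hb)
  rw [key, ← Complex.ofReal_add, Complex.Gamma_ofReal, Complex.Gamma_ofReal,
    Complex.Gamma_ofReal, ← Complex.ofReal_mul, ← Complex.ofReal_mul] at h
  have h3 := Complex.ofReal_inj.mp h
  have hG : Real.Gamma (a + b) ≠ 0 := (Real.Gamma_pos_of_pos (by linarith)).ne'
  field_simp
  linarith [h3]

lemma beta_scaled (a b k t : ℝ) (ha : 0 < a) (hb : 0 < b) (hkt : k < t) :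
    ∫ τ in k..t, (τ - k) ^ (a - 1) * (t - τ) ^ (b - 1)
      = (t - k) ^ (a + b - 1) * (Real.Gamma a * Real.Gamma b / Real.Gamma (a + b)) := by
  set T := t - k with hT
  have hT0 : 0 < T := by simp [hT]; linarith
  have h1 : (∫ τ in k..t, (τ - k) ^ (a - 1) * (t - τ) ^ (b - 1))
      = ∫ x in (0:ℝ)..T, x ^ (a - 1) * (T - x) ^ (b - 1) := by
    have h := intervalIntegral.integral_comp_add_right (a := (0:ℝ)) (b := T)
      (f := fun τ => (τ - k) ^ (a - 1) * (t - τ) ^ (b - 1)) k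
    rw [zero_add, show T + k = t by rw [hT]; ring] at h
    rw [← h]
    refine intervalIntegral.integral_congr fun x hx => ?_
    rw [add_sub_cancel_right, show t - (x + k) = T - x by rw [hT]; ring]
  have h2 : (∫ x in (0:ℝ)..T, x ^ (a - 1) * (T - x) ^ (b - 1))
      = T • ∫ x in (0:ℝ)..1, (T * x) ^ (a - 1) * (T - T * x) ^ (b - 1) := by
    rw [intervalIntegral.smul_integral_comp_mul_left
      (f := fun x => x ^ (a - 1) * (T - x) ^ (b - 1)) (c := T)]
    norm_num
  rw [h1, h2]
  have h3 : (∫ x in (0:ℝ)..1, (T * x) ^ (a - 1) * (T - T * x) ^ (b - 1))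
      = T ^ (a - 1) * T ^ (b - 1) * ∫ x in (0:ℝ)..1, x ^ (a - 1) * (1 - x) ^ (b - 1) := by
    rw [← intervalIntegral.integral_const_mul]
    refine intervalIntegral.integral_congr fun x hx => ?_
    rw [Set.uIcc_of_le zero_le_one] at hx
    rw [Real.mul_rpow hT0.le hx.1, show T - T * x = T * (1 - x) by ring,
      Real.mul_rpow hT0.le (by linarith [hx.2])]
    ring
  rw [h3, real_beta a b ha hb, smul_eq_mul]
  rw [show T * (T ^ (a-1) * T ^ (b-1) * (Real.Gamma a * Real.Gamma b / Real.Gamma (a+b)))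
      = (T ^ (a-1) * T ^ (b-1) * T ^ (1:ℝ)) * (Real.Gamma a * Real.Gamma b / Real.Gamma (a+b))
      by rw [Real.rpow_one]; ring,
    ← Real.rpow_add hT0, ← Real.rpow_add hT0]
  ring_nf

/-- Explicit differentiation rule for the fractional B-spline:
D^γ B_α(t) = Δ^{α+1} t_+^{α−γ} / Γ(α−γ+1), where the Caputo derivative on the
left is written explicitly as a fractional integral of the pointwise derivative
B_α′(τ) (a finite sum for each τ). -/
theorem caputo_deriv_fracBspline (α γ : ℝ) (hα : 1 < α) (hγ0 : 0 < γ) (hγ1 : γ < 1)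
    (t : ℝ) (ht : 0 < t) :
    (1 / Real.Gamma (1 - γ)) *
        ∫ τ in (0:ℝ)..t,
          ((α / Real.Gamma (α + 1)) *
              ∑ k ∈ Finset.range (⌊τ⌋₊ + 1),
                (-1 : ℝ) ^ k * gbinom (α + 1) k * (τ - k) ^ (α - 1)) *
            (t - τ) ^ (-γ)
      = (1 / Real.Gamma (α - γ + 1)) *
          ∑ k ∈ Finset.range (⌊t⌋₊ + 1),
            (-1 : ℝ) ^ k * gbinom (α + 1) k * (t - k) ^ (α - γ) := by
  have hα1 : (0:ℝ) < α - 1 := by linarith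
  set c : ℕ → ℝ := fun k => (-1 : ℝ) ^ k * gbinom (α + 1) k with hc
  set C : ℝ := α / Real.Gamma (α + 1) with hC
  -- integrability of the core function
  have hint : ∀ k : ℕ, IntervalIntegrable
      (fun τ => max (τ - (k:ℝ)) 0 ^ (α - 1) * (t - τ) ^ (-γ)) volume 0 t := by
    intro k
    have h1 : IntervalIntegrable (fun τ => (t - τ) ^ (-γ)) volume 0 t := by
      have := (intervalIntegrable_rpow' (a := t) (b := 0) (r := -γ) (by linarith)).comp_sub_left t
      simpa using this
    refine h1.continuousOn_mul ?_
    apply Continuous.continuousOn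
    exact (continuous_id.sub continuous_const).max continuous_const |>.rpow_const
      (fun x => Or.inr hα1.le)
  -- Step A: rewrite the integrand
  have stepA : (∫ τ in (0:ℝ)..t,
        (C * ∑ k ∈ Finset.range (⌊τ⌋₊ + 1), c k * (τ - k) ^ (α - 1)) * (t - τ) ^ (-γ))
      = ∫ τ in (0:ℝ)..t, ∑ k ∈ Finset.range (⌊t⌋₊ + 1),
          C * c k * (max (τ - (k:ℝ)) 0 ^ (α - 1) * (t - τ) ^ (-γ)) := by
    refine intervalIntegral.integral_congr fun τ hτ => ?_
    rw [Set.uIcc_of_le ht.le] at hτ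
    have hsum : (∑ k ∈ Finset.range (⌊τ⌋₊ + 1), c k * (τ - k) ^ (α - 1))
        = ∑ k ∈ Finset.range (⌊t⌋₊ + 1), c k * max (τ - (k:ℝ)) 0 ^ (α - 1) := by
      rw [Finset.sum_congr rfl (fun k hk => ?_)]
      · refine Finset.sum_subset ?_ ?_
        · exact Finset.range_subset_range.mpr (by
            have := Nat.floor_le_floor (R := ℝ) hτ.2; omega)
        · intro k _ hk
          have hk' : ⌊τ⌋₊ + 1 ≤ k := by
            simpa [Finset.mem_range, Nat.lt_succ_iff] using hk
          have : τ < (k:ℝ) := lt_of_lt_of_le (Nat.lt_floor_add_one τ) (by exact_mod_cast hk')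
          rw [max_eq_right (by linarith), Real.zero_rpow (by linarith), mul_zero]
      · have hkτ : (k:ℝ) ≤ τ := by
          have : k ≤ ⌊τ⌋₊ := by simpa [Finset.mem_range, Nat.lt_succ_iff] using hk
          exact le_trans (by exact_mod_cast this) (Nat.floor_le hτ.1)
        rw [max_eq_left (by linarith)]
    rw [hsum, Finset.mul_sum, Finset.sum_mul]
    exact Finset.sum_congr rfl fun k _ => by ring
  -- Step C: value of each integral
  have stepC : ∀ k ∈ Finset.range (⌊t⌋₊ + 1),
      (∫ τ in (0:ℝ)..t, max (τ - (k:ℝ)) 0 ^ (α - 1) * (t - τ) ^ (-γ))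
        = (t - k) ^ (α - γ) *
            (Real.Gamma α * Real.Gamma (1 - γ) / Real.Gamma (α + (1 - γ))) := by
    intro k hk
    have hkt : (k:ℝ) ≤ t := by
      have : k ≤ ⌊t⌋₊ := by simpa [Finset.mem_range, Nat.lt_succ_iff] using hk
      exact le_trans (by exact_mod_cast this) (Nat.floor_le ht.le)
    rcases eq_or_lt_of_le hkt with heq | hlt
    · -- k = t : both sides vanish
      have hz : (∫ τ in (0:ℝ)..t, max (τ - (k:ℝ)) 0 ^ (α - 1) * (t - τ) ^ (-γ)) = 0 := by
        rw [intervalIntegral.integral_congr (g := fun _ => (0:ℝ)) fun τ hτ => ?_,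
          intervalIntegral.integral_zero]
        rw [Set.uIcc_of_le ht.le] at hτ
        rw [max_eq_right (by rw [heq]; linarith [hτ.2]),
          Real.zero_rpow (by linarith), zero_mul]
      rw [hz, ← heq, sub_self, Real.zero_rpow (by linarith), zero_mul]
    · -- k < t : split the integral and apply beta_scaled
      have hsplit : (∫ τ in (0:ℝ)..t, max (τ - (k:ℝ)) 0 ^ (α - 1) * (t - τ) ^ (-γ))
          = (∫ τ in (0:ℝ)..(k:ℝ), max (τ - (k:ℝ)) 0 ^ (α - 1) * (t - τ) ^ (-γ))
            + ∫ τ in (k:ℝ)..t, max (τ - (k:ℝ)) 0 ^ (α - 1) * (t - τ) ^ (-γ) := by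
        rw [intervalIntegral.integral_add_adjacent_intervals]
        · exact (hint k).mono_set (by
            rw [Set.uIcc_of_le (by positivity : (0:ℝ) ≤ (k:ℝ)), Set.uIcc_of_le ht.le]
            exact Set.Icc_subset_Icc le_rfl hkt)
        · exact (hint k).mono_set (by
            rw [Set.uIcc_of_le hlt.le, Set.uIcc_of_le ht.le]
            exact Set.Icc_subset_Icc (by positivity) le_rfl)
      have hfirst : (∫ τ in (0:ℝ)..(k:ℝ), max (τ - (k:ℝ)) 0 ^ (α - 1) * (t - τ) ^ (-γ)) = 0 := by
        rw [intervalIntegral.integral_congr (g := fun _ => (0:ℝ)) fun τ hτ => ?_,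
          intervalIntegral.integral_zero]
        rw [Set.uIcc_of_le (by positivity : (0:ℝ) ≤ (k:ℝ))] at hτ
        rw [max_eq_right (by linarith [hτ.2]), Real.zero_rpow (by linarith), zero_mul]
      have hsecond : (∫ τ in (k:ℝ)..t, max (τ - (k:ℝ)) 0 ^ (α - 1) * (t - τ) ^ (-γ))
          = ∫ τ in (k:ℝ)..t, (τ - (k:ℝ)) ^ (α - 1) * (t - τ) ^ ((1 - γ) - 1) := by
        refine intervalIntegral.integral_congr fun τ hτ => ?_
        rw [Set.uIcc_of_le hlt.le] at hτ
        rw [max_eq_left (by linarith [hτ.1]), show (1:ℝ) - γ - 1 = -γ by ring]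
      rw [hsplit, hfirst, hsecond, zero_add,
        beta_scaled α (1 - γ) k t (by linarith) (by linarith) hlt]
      norm_num [show α + (1 - γ) - 1 = α - γ by ring]
  -- put it together
  rw [stepA, intervalIntegral.integral_finset_sum
    (fun k _ => ((hint k).const_mul (C * c k)) )]
  simp_rw [intervalIntegral.integral_const_mul]
  rw [Finset.sum_congr rfl fun k hk => by rw [stepC k hk], Finset.mul_sum, Finset.mul_sum]
  refine Finset.sum_congr rfl fun k _ => ?_
  have hGα : Real.Gamma (α + 1) = α * Real.Gamma α := by
    rw [Real.Gamma_add_one (by linarith)]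
  have hGα0 : Real.Gamma α ≠ 0 := (Real.Gamma_pos_of_pos (by linarith)).ne'
  have hGγ0 : Real.Gamma (1 - γ) ≠ 0 := (Real.Gamma_pos_of_pos (by linarith)).ne'
  have hGs0 : Real.Gamma (α + (1 - γ)) ≠ 0 := (Real.Gamma_pos_of_pos (by linarith)).ne'
  have hα0 : α ≠ 0 := by linarith
  rw [show α - γ + 1 = α + (1 - γ) by ring, hC, hGα]
  field_simp
  ring
end

section
/- Let α > 0. Then the fractional B-spline B_α satisfies the two-scale refinement equation: for every t ∈ ℝ, B_α(t) = ∑_{k∈ℕ} a_k^{(α)} B_α(2t − k), where the mask coefficients are a_k^{(α)} := 2^{−α} binom(α+1, k). For each fixed t the sum has only finitely many nonzero terms (those with k ≤ 2t), since B_α vanishes on the negative axis. -/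
/-- Fractional truncated power: t_+^α := t^α for t > 0 and 0 for t ≤ 0. -/
noncomputable def tpow (t α : ℝ) : ℝ := if 0 < t then t ^ α else 0

/-- Fractional B-spline of degree α. -/
noncomputable def fracBspline (α : ℝ) (t : ℝ) : ℝ :=
  (1 / Real.Gamma (α + 1)) * ∑' k : ℕ, (-1 : ℝ) ^ k * gbinom (α + 1) k * tpow (t - k) α

open Finset Polynomial
private lemma tpow_of_nonpos {s α : ℝ} (h : s ≤ 0) : tpow s α = 0 := by
  simp [tpow, not_lt.mpr h]

private lemma tpow_half (s α : ℝ) : (2:ℝ) ^ (-α) * tpow (2*s) α = tpow s α := by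
  by_cases h : 0 < s
  · have h2 : 0 < 2*s := by linarith
    simp only [tpow, if_pos h, if_pos h2]
    rw [Real.mul_rpow (by norm_num) h.le, Real.rpow_neg (by norm_num)]
    have : (2:ℝ) ^ α ≠ 0 := ne_of_gt (Real.rpow_pos_of_pos (by norm_num) _)
    field_simp
  · have h2 : ¬ 0 < 2*s := by intro hh; exact h (by linarith)
    simp [tpow, h, h2]

private lemma fracBspline_of_nonpos {α s : ℝ} (h : s ≤ 0) : fracBspline α s = 0 := by
  unfold fracBspline
  rw [tsum_eq_sum (s := (∅ : Finset ℕ)) ?_, Finset.sum_empty, mul_zero]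
  intro k _
  rw [tpow_of_nonpos (by have : (0:ℝ) ≤ k := Nat.cast_nonneg k; linarith), mul_zero]

private lemma dp_eval (x : ℝ) (k : ℕ) : (descPochhammer ℝ k).eval x = ∏ i ∈ Finset.range k, (x - i) := by
  induction k with
  | zero => simp [descPochhammer_zero]
  | succ k ih => rw [descPochhammer_succ_eval, ih, Finset.prod_range_succ]

private lemma gbinom_eq_dp (x : ℝ) (k : ℕ) : gbinom x k = (descPochhammer ℝ k).eval x / k.factorial := by
  rw [gbinom, dp_eval]

private lemma gbinom_natCast (m k : ℕ) : gbinom (m : ℝ) k = m.choose k := by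
  rw [gbinom_eq_dp, descPochhammer_eval_eq_descFactorial ℝ m k,
    Nat.descFactorial_eq_factorial_mul_choose]
  have : (k.factorial : ℝ) ≠ 0 := by exact_mod_cast k.factorial_ne_zero
  push_cast
  field_simp

private lemma int_key (m n : ℕ) :
    ∑ j ∈ Finset.range (n+1), (-1:ℤ)^j * (m.choose j) * (m.choose (n-j))
      = if Even n then (-1:ℤ)^(n/2) * m.choose (n/2) else 0 := by
  classical
  have hq : ∀ j : ℕ, ((1 - X : ℤ[X]) ^ m).coeff j = (-1:ℤ)^j * m.choose j := by
    intro j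
    have h0 : (1 - X : ℤ[X]) = C (-1) * (X + C (-1)) := by
      rw [C_neg, C_1]; ring
    rw [h0, mul_pow, ← map_pow, coeff_C_mul, coeff_X_add_C_pow]
    by_cases hj : j ≤ m
    · rw [← mul_assoc, ← pow_add, show m + (m - j) = 2*(m-j) + j by omega,
        pow_add, pow_mul]
      simp
    · rw [Nat.choose_eq_zero_of_lt (by omega)]
      simp
  have hp : ∀ j : ℕ, ((1 + X : ℤ[X]) ^ m).coeff j = (m.choose j : ℤ) :=
    fun j => coeff_one_add_X_pow ℤ m j
  have hmul : (1 + X : ℤ[X]) ^ m * (1 - X) ^ m = (1 - X^2) ^ m := by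
    rw [← mul_pow]; ring_nf
  have hexp : (1 - X^2 : ℤ[X]) ^ m
      = ∑ k ∈ Finset.range (m+1), C ((-1:ℤ)^k * m.choose k) * X^(2*k) := by
    rw [sub_eq_add_neg, add_comm, add_pow]
    refine Finset.sum_congr rfl fun k _ => ?_
    rw [one_pow, mul_one, neg_pow, ← pow_mul]
    simp only [map_mul, map_pow, map_neg, map_one, C_eq_natCast]
    ring
  have hcoeff : ((1 - X^2 : ℤ[X]) ^ m).coeff n
      = if Even n then (-1:ℤ)^(n/2) * m.choose (n/2) else 0 := by
    rw [hexp, finset_sum_coeff]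
    simp only [coeff_C_mul, coeff_X_pow]
    by_cases hev : Even n
    · obtain ⟨r, hr⟩ := hev
      have hn2 : n / 2 = r := by omega
      rw [if_pos ⟨r, hr⟩, hn2]
      by_cases hrm : r ≤ m
      · rw [Finset.sum_eq_single r]
        · simp [hr, two_mul]
        · intro b _ hb
          rw [if_neg (by omega), mul_zero]
        · intro h
          exact absurd (Finset.mem_range.mpr (by omega)) h
      · rw [Nat.choose_eq_zero_of_lt (by omega), Finset.sum_eq_zero]
        · simp
        · intro b hb
          rw [if_neg (by simp at hb; omega), mul_zero]
    · rw [if_neg hev, Finset.sum_eq_zero]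
      intro b _
      rw [if_neg (fun h => hev ⟨b, by omega⟩), mul_zero]
  have key : ((1 + X : ℤ[X]) ^ m * (1 - X) ^ m).coeff n
      = ∑ j ∈ Finset.range (n+1), (-1:ℤ)^j * (m.choose j) * (m.choose (n-j)) := by
    rw [coeff_mul, Finset.Nat.sum_antidiagonal_eq_sum_range_succ_mk,
      ← Finset.sum_range_reflect _ (n+1)]
    refine Finset.sum_congr rfl fun j hj => ?_
    simp only [Finset.mem_range] at hj
    simp only [Nat.succ_sub_one]
    rw [hp, hq, show n - (n - j) = j by omega]
    ring
  rw [← key, hmul, hcoeff]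

private lemma nat_key (m n : ℕ) :
    ∑ j ∈ Finset.range (n+1), (-1:ℝ)^j * (m.choose j) * (m.choose (n-j))
      = if Even n then (-1:ℝ)^(n/2) * m.choose (n/2) else 0 := by
  have h := int_key m n
  by_cases hev : Even n
  · rw [if_pos hev] at h ⊢; exact_mod_cast h
  · rw [if_neg hev] at h ⊢; exact_mod_cast h

private lemma real_key (x : ℝ) (n : ℕ) :
    ∑ j ∈ Finset.range (n+1), (-1:ℝ)^j * gbinom x j * gbinom x (n-j)
      = if Even n then (-1:ℝ)^(n/2) * gbinom x (n/2) else 0 := by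
  classical
  set P : Polynomial ℝ := ∑ j ∈ Finset.range (n+1),
    C ((-1:ℝ)^j / (j.factorial * (n-j).factorial)) *
      (descPochhammer ℝ j * descPochhammer ℝ (n-j)) with hP
  set Q : Polynomial ℝ := if Even n then
    C ((-1:ℝ)^(n/2) / (n/2).factorial) * descPochhammer ℝ (n/2) else 0 with hQ
  have evalP : ∀ y : ℝ, P.eval y
      = ∑ j ∈ Finset.range (n+1), (-1:ℝ)^j * gbinom y j * gbinom y (n-j) := by
    intro y
    rw [hP, eval_finset_sum]
    refine Finset.sum_congr rfl fun j _ => ?_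
    have h1 : (j.factorial : ℝ) ≠ 0 := by exact_mod_cast j.factorial_ne_zero
    have h2 : ((n-j).factorial : ℝ) ≠ 0 := by exact_mod_cast (n-j).factorial_ne_zero
    simp only [eval_mul, eval_C]
    rw [gbinom_eq_dp, gbinom_eq_dp]
    field_simp
  have evalQ : ∀ y : ℝ, Q.eval y
      = if Even n then (-1:ℝ)^(n/2) * gbinom y (n/2) else 0 := by
    intro y
    rw [hQ]
    split_ifs with h
    · have h1 : (((n/2).factorial : ℝ)) ≠ 0 := by exact_mod_cast (n/2).factorial_ne_zero
      simp only [eval_mul, eval_C]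
      rw [gbinom_eq_dp]
      field_simp
    · simp
  have hPQ : P = Q := by
    apply Polynomial.eq_of_infinite_eval_eq
    apply Set.Infinite.mono (s := Set.range ((↑) : ℕ → ℝ))
    · rintro - ⟨m, rfl⟩
      show P.eval _ = Q.eval _
      rw [evalP, evalQ]
      simp only [gbinom_natCast]
      exact nat_key m n
    · exact Set.infinite_range_of_injective Nat.cast_injective
  have := congrArg (fun p : Polynomial ℝ => p.eval x) hPQ
  simpa [evalP, evalQ] using this

private lemma triangle (M : ℕ) (F : ℕ → ℕ → ℝ) (hF : ∀ k j, M ≤ k + j → F k j = 0) :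
    ∑ k ∈ Finset.range M, ∑ j ∈ Finset.range M, F k j
      = ∑ n ∈ Finset.range M, ∑ p ∈ Finset.HasAntidiagonal.antidiagonal n, F p.1 p.2 := by
  classical
  have hdisj : ∀ a ∈ Finset.range M, ∀ b ∈ Finset.range M, a ≠ b →
      Disjoint (Finset.HasAntidiagonal.antidiagonal a) (Finset.HasAntidiagonal.antidiagonal b) := by
    intro a _ b _ hab
    rw [Finset.disjoint_left]
    intro p hpa hpb
    rw [Finset.HasAntidiagonal.mem_antidiagonal] at hpa hpb
    omega
  rw [← Finset.sum_product', ← Finset.sum_biUnion hdisj]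
  refine (Finset.sum_subset ?_ ?_).symm
  · intro p hp
    simp only [Finset.mem_biUnion, Finset.HasAntidiagonal.mem_antidiagonal, Finset.mem_range] at hp
    obtain ⟨n, hn, hpn⟩ := hp
    simp only [Finset.mem_product, Finset.mem_range]
    constructor <;> omega
  · intro p _ hnp
    simp only [Finset.mem_biUnion, Finset.HasAntidiagonal.mem_antidiagonal, Finset.mem_range] at hnp
    apply hF
    by_contra h
    exact hnp ⟨p.1 + p.2, by omega, rfl⟩

private lemma even_sum (N : ℕ) (G : ℕ → ℝ) :
    ∑ n ∈ Finset.range (2*N), (if Even n then G (n/2) else 0)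
      = ∑ m ∈ Finset.range N, G m := by
  induction N with
  | zero => simp
  | succ N ih =>
    rw [show 2*(N+1) = (2*N + 1) + 1 by ring, Finset.sum_range_succ, Finset.sum_range_succ,
      ih, Finset.sum_range_succ]
    have h1 : ¬ Even (2*N+1) := by simp [Nat.even_add_one, parity_simps]
    rw [if_neg h1, if_pos (even_two_mul N), show 2*N/2 = N by omega]
    ring

/-- Two-scale refinement equation for the fractional B-spline:
B_α(t) = ∑_{k∈ℕ} 2^{−α} binom(α+1, k) B_α(2t − k). -/
theorem fracBspline_refinement (α : ℝ) (hα : 0 < α) (t : ℝ) :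
    fracBspline α t
      = ∑' k : ℕ, (2 : ℝ) ^ (-α) * gbinom (α + 1) k * fracBspline α (2 * t - k) := by
  classical
  obtain ⟨N, hN⟩ : ∃ N : ℕ, 2 * t < N := ⟨⌈2*t⌉₊ + 1, by
    have := Nat.le_ceil (2*t)
    push_cast
    linarith⟩
  have hN0 : (0:ℝ) ≤ N := Nat.cast_nonneg N
  have hNt : t < N := by by_contra h; push_neg at h; linarith
  have hvan : ∀ k : ℕ, k ∉ Finset.range N →
      (2:ℝ)^(-α) * gbinom (α+1) k * fracBspline α (2*t - k) = 0 := by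
    intro k hk
    rw [Finset.mem_range, not_lt] at hk
    have hk' : (N:ℝ) ≤ k := by exact_mod_cast hk
    rw [fracBspline_of_nonpos (by linarith), mul_zero]
  rw [tsum_eq_sum hvan]
  have stepA : fracBspline α t
      = (1 / Real.Gamma (α + 1)) *
          ∑ m ∈ Finset.range N, (-1:ℝ)^m * gbinom (α+1) m * tpow (t - m) α := by
    simp only [fracBspline]
    congr 1
    apply tsum_eq_sum
    intro m hm
    rw [Finset.mem_range, not_lt] at hm
    have hm' : (N:ℝ) ≤ m := by exact_mod_cast hm
    rw [tpow_of_nonpos (by linarith), mul_zero]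
  have stepC : ∀ k : ℕ, fracBspline α (2*t - k)
      = (1 / Real.Gamma (α + 1)) *
          ∑ j ∈ Finset.range N, (-1:ℝ)^j * gbinom (α+1) j * tpow (2*t - k - j) α := by
    intro k
    simp only [fracBspline]
    congr 1
    apply tsum_eq_sum
    intro j hj
    rw [Finset.mem_range, not_lt] at hj
    have hj' : (N:ℝ) ≤ j := by exact_mod_cast hj
    have hk0 : (0:ℝ) ≤ k := Nat.cast_nonneg k
    rw [tpow_of_nonpos (by linarith), mul_zero]
  rw [stepA]
  set c := 1 / Real.Gamma (α + 1) with hc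
  set F : ℕ → ℕ → ℝ := fun k j =>
    gbinom (α+1) k * ((-1:ℝ)^j * gbinom (α+1) j * tpow (2*t - k - j) α) with hF
  have hFzero : ∀ k j, N ≤ k + j → F k j = 0 := by
    intro k j h
    have h' : (N:ℝ) ≤ (k:ℝ) + j := by exact_mod_cast h
    simp only [hF]
    rw [tpow_of_nonpos (by linarith), mul_zero, mul_zero]
  have prodform : ∑ k ∈ Finset.range N, (2:ℝ)^(-α) * gbinom (α+1) k * fracBspline α (2*t-k)
      = (2:ℝ)^(-α) * c * ∑ k ∈ Finset.range N, ∑ j ∈ Finset.range N, F k j := by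
    simp only [Finset.mul_sum]
    refine Finset.sum_congr rfl fun k _ => ?_
    rw [stepC k]
    simp only [Finset.mul_sum, hF]
    refine Finset.sum_congr rfl fun j _ => ?_
    ring
  rw [prodform, triangle N F hFzero]
  have inner : ∀ n ∈ Finset.range N, ∑ p ∈ Finset.HasAntidiagonal.antidiagonal n, F p.1 p.2
      = (if Even n then (-1:ℝ)^(n/2) * gbinom (α+1) (n/2) else 0) * tpow (2*t - n) α := by
    intro n _
    rw [Finset.Nat.sum_antidiagonal_eq_sum_range_succ_mk]
    have e1 : ∀ k ∈ Finset.range (n+1),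
        F (k, n-k).1 (k, n-k).2
          = ((-1:ℝ)^(n-k) * gbinom (α+1) (n-k) * gbinom (α+1) k) * tpow (2*t - n) α := by
      intro k hk
      rw [Finset.mem_range] at hk
      simp only [hF]
      have harg : 2*t - (k:ℝ) - ((n - k : ℕ):ℝ) = 2*t - n := by
        rw [Nat.cast_sub (by omega)]; ring
      rw [harg]
      ring
    rw [Finset.sum_congr rfl e1, ← Finset.sum_mul]
    have reflect : ∑ k ∈ Finset.range (n+1),
        (-1:ℝ)^(n-k) * gbinom (α+1) (n-k) * gbinom (α+1) k
        = ∑ j ∈ Finset.range (n+1), (-1:ℝ)^j * gbinom (α+1) j * gbinom (α+1) (n-j) := by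
      rw [← Finset.sum_range_reflect
        (fun j => (-1:ℝ)^j * gbinom (α+1) j * gbinom (α+1) (n-j)) (n+1)]
      refine Finset.sum_congr rfl fun k hk => ?_
      rw [Finset.mem_range] at hk
      simp only [Nat.add_sub_cancel]
      rw [Nat.sub_sub_self (by omega)]
    rw [reflect, real_key]
  rw [Finset.sum_congr rfl inner]
  have ext : ∑ n ∈ Finset.range N,
      (if Even n then (-1:ℝ)^(n/2) * gbinom (α+1) (n/2) else 0) * tpow (2*t - n) α
      = ∑ n ∈ Finset.range (2*N),
      (if Even n then (-1:ℝ)^(n/2) * gbinom (α+1) (n/2) else 0) * tpow (2*t - n) α := by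
    apply Finset.sum_subset (Finset.range_subset_range.mpr (by omega))
    intro n _ hn
    rw [Finset.mem_range, not_lt] at hn
    have hn' : (N:ℝ) ≤ n := by exact_mod_cast hn
    rw [tpow_of_nonpos (by linarith), mul_zero]
  rw [ext]
  set G : ℕ → ℝ := fun m => (-1:ℝ)^m * gbinom (α+1) m * tpow (2*t - 2*m) α with hG
  have conv : ∀ n ∈ Finset.range (2*N),
      (if Even n then (-1:ℝ)^(n/2) * gbinom (α+1) (n/2) else 0) * tpow (2*t - n) α
      = (if Even n then G (n/2) else 0) := by
    intro n _
    split_ifs with h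
    · obtain ⟨r, rfl⟩ := h
      have h2 : (r + r)/2 = r := by omega
      simp only [hG, h2]
      have harg : 2*t - ((r + r : ℕ):ℝ) = 2*t - 2*(r:ℝ) := by push_cast; ring
      rw [harg]
    · rw [zero_mul]
  rw [Finset.sum_congr rfl conv, even_sum N G]
  simp only [Finset.mul_sum]
  refine Finset.sum_congr rfl fun m _ => ?_
  simp only [hG]
  have harg : 2*t - 2*(m:ℝ) = 2*(t - m) := by ring
  rw [harg, ← tpow_half (t - (m:ℝ)) α]
  ring
end

section
/- Let 0 < γ < 1 and t > 0. Then the Caputo fractional derivative of order γ of sin(πt) is given by the absolutely convergent series (1/Γ(1−γ)) ∫₀ᵗ π cos(πτ) (t−τ)^{−γ} dτ = π t^{1−γ} ∑_{m=0}^{∞} (−1)^m (πt)^{2m} / Γ(2m+2−γ); this series representation equals (π t^{1−γ} / (2Γ(2−γ))) (₁F₁(1, 2−γ, iπt) + ₁F₁(1, 2−γ, −iπt)) in terms of Kummer's confluent hypergeometric function ₁F₁(α, β, z) = (Γ(β)/Γ(α)) ∑_{k∈ℕ} (Γ(α+k)/(Γ(β+k) k!)) z^k. -/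
open Real

/-- Kummer's confluent hypergeometric function
₁F₁(a, b, z) = (Γ(b)/Γ(a)) ∑_{k∈ℕ} (Γ(a+k)/(Γ(b+k) k!)) z^k. -/
noncomputable def kummer (a b z : ℂ) : ℂ :=
  (Complex.Gamma b / Complex.Gamma a) *
    ∑' k : ℕ, Complex.Gamma (a + k) / (Complex.Gamma (b + k) * (k.factorial : ℂ)) * z ^ k

open MeasureTheory

lemma gamma_fac_le {x : ℝ} (hx : 1 ≤ x) (n : ℕ) :
    Real.Gamma x * n.factorial ≤ Real.Gamma (x + n) := by
  have hx0 : 0 < x := lt_of_lt_of_le one_pos hx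
  induction n with
  | zero => simp
  | succ n ih =>
    have hxn : (0:ℝ) < x + n := by positivity
    have h1 : Real.Gamma (x + ((n:ℝ)+1)) = (x + n) * Real.Gamma (x + n) := by
      rw [show (x + ((n:ℝ)+1)) = (x + n) + 1 by ring, Real.Gamma_add_one hxn.ne']
    push_cast
    rw [h1]
    calc Real.Gamma x * ((n+1).factorial : ℝ)
        = ((n:ℝ)+1) * (Real.Gamma x * n.factorial) := by
          push_cast [Nat.factorial_succ]; ring
      _ ≤ (x + n) * (Real.Gamma x * n.factorial) := by
          apply mul_le_mul_of_nonneg_right (by linarith)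
          have := Real.Gamma_pos_of_pos hx0
          positivity
      _ ≤ (x + n) * Real.Gamma (x + n) := by
          apply mul_le_mul_of_nonneg_left ih hxn.le

lemma summable_main (γ r : ℝ) (hγ1 : γ < 1) :
    Summable (fun m : ℕ => |(-1 : ℝ) ^ m * r ^ (2 * m) / Real.Gamma (2 * m + 2 - γ)|) := by
  have hx : (1:ℝ) ≤ 2 - γ := by linarith
  have hG0 : 0 < Real.Gamma (2 - γ) := Real.Gamma_pos_of_pos (by linarith)
  have hsum : Summable (fun m : ℕ => |r| ^ (2*m) / (Real.Gamma (2-γ) * (2*m).factorial)) := by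
    have h1 : Summable (fun m : ℕ => (1 / Real.Gamma (2-γ)) * (|r| ^ (2*m) / (2*m).factorial)) := by
      apply Summable.mul_left
      have := (Real.summable_pow_div_factorial |r|).comp_injective
        (i := fun m : ℕ => 2 * m) (mul_right_injective₀ two_ne_zero)
      simpa [Function.comp_def] using this
    apply h1.congr
    intro m; field_simp
  apply Summable.of_nonneg_of_le (fun m => abs_nonneg _) _ hsum
  intro m
  have hGm : Real.Gamma (2-γ) * ((2*m).factorial : ℝ) ≤ Real.Gamma (2 * m + 2 - γ) := by
    have := gamma_fac_le hx (2*m)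
    convert this using 2
    push_cast; ring
  have hGm0 : 0 < Real.Gamma (2 * m + 2 - γ) := by
    have : (0:ℝ) < Real.Gamma (2-γ) * ((2*m).factorial : ℝ) := by positivity
    linarith
  rw [abs_div, abs_mul, abs_pow, abs_pow, abs_neg, abs_one, one_pow, one_mul,
    abs_of_pos hGm0]
  exact div_le_div_of_nonneg_left (by positivity) (by positivity) hGm

lemma beta_int {γ t : ℝ} (hγ0 : 0 < γ) (hγ1 : γ < 1) (ht : 0 < t) (n : ℕ) :
    ∫ τ in (0:ℝ)..t, τ ^ n * (t - τ) ^ (-γ)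
      = (n.factorial : ℝ) * Real.Gamma (1 - γ) / Real.Gamma (n + 2 - γ) * t ^ ((n:ℝ) + 1 - γ) := by
  have hγ1' : (0:ℝ) < 1 - γ := by linarith
  have hn0 : (0:ℝ) ≤ (n:ℝ) := Nat.cast_nonneg n
  have hGpos : 0 < Real.Gamma ((n:ℝ) + 2 - γ) := Real.Gamma_pos_of_pos (by linarith)
  have hres : (0:ℝ) < ((n:ℂ) + 1).re := by
    simp [Complex.add_re]
    positivity
  have hret : (0:ℝ) < ((1:ℂ) - (γ:ℂ)).re := by
    simp [Complex.sub_re]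
    linarith
  have hG := Complex.Gamma_mul_Gamma_eq_betaIntegral hres hret
  have hscaled := Complex.betaIntegral_scaled ((n:ℂ) + 1) (1 - (γ:ℂ)) ht
  have hcongr : (∫ τ in (0:ℝ)..t, ((τ ^ n * (t - τ) ^ (-γ) : ℝ) : ℂ))
      = ∫ τ in (0:ℝ)..t, (τ:ℂ) ^ (((n:ℂ) + 1) - 1) * ((t:ℂ) - τ) ^ ((1 - (γ:ℂ)) - 1) := by
    apply intervalIntegral.integral_congr
    intro τ hτ
    rw [Set.uIcc_of_le ht.le] at hτ
    obtain ⟨h0, h1⟩ := hτ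
    have h2 : (0:ℝ) ≤ t - τ := by linarith
    have e1 : ((n:ℂ) + 1) - 1 = ((n:ℕ) : ℂ) := by ring
    have e2 : ((1:ℂ) - (γ:ℂ)) - 1 = ((-γ : ℝ) : ℂ) := by push_cast; ring
    dsimp only
    rw [e1, e2, Complex.cpow_natCast,
      show ((t:ℂ) - (τ:ℂ)) = ((t - τ : ℝ) : ℂ) by push_cast; ring,
      ← Complex.ofReal_cpow h2]
    push_cast
    ring
  have key : ((∫ τ in (0:ℝ)..t, τ ^ n * (t - τ) ^ (-γ) : ℝ) : ℂ)
      = ((t:ℝ) ^ ((n:ℝ) + 1 - γ) : ℝ) * (Complex.betaIntegral ((n:ℂ) + 1) (1 - (γ:ℂ))) := by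
    rw [← intervalIntegral.integral_ofReal, hcongr, hscaled]
    congr 1
    rw [Complex.ofReal_cpow ht.le]
    congr 1
    push_cast; ring
  have hg1 : Complex.Gamma ((n:ℂ) + 1) = (n.factorial : ℂ) := Complex.Gamma_nat_eq_factorial n
  have hg2 : Complex.Gamma (1 - (γ:ℂ)) = ((Real.Gamma (1 - γ) : ℝ) : ℂ) := by
    rw [show (1 - (γ:ℂ)) = (((1 - γ : ℝ)) : ℂ) by push_cast; ring, Complex.Gamma_ofReal]
  have hg3 : Complex.Gamma (((n:ℂ) + 1) + (1 - (γ:ℂ))) = ((Real.Gamma ((n:ℝ) + 2 - γ) : ℝ) : ℂ) := by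
    rw [show (((n:ℂ) + 1) + (1 - (γ:ℂ))) = ((((n:ℝ) + 2 - γ : ℝ)) : ℂ) by push_cast; ring,
      Complex.Gamma_ofReal]
  have hg3ne : Complex.Gamma (((n:ℂ) + 1) + (1 - (γ:ℂ))) ≠ 0 := by
    rw [hg3]; exact_mod_cast hGpos.ne'
  have hbeta : Complex.betaIntegral ((n:ℂ) + 1) (1 - (γ:ℂ))
      = ((n.factorial : ℝ) * Real.Gamma (1 - γ) / Real.Gamma ((n:ℝ) + 2 - γ) : ℝ) := by
    have : Complex.betaIntegral ((n:ℂ) + 1) (1 - (γ:ℂ))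
        = Complex.Gamma ((n:ℂ) + 1) * Complex.Gamma (1 - (γ:ℂ))
          / Complex.Gamma (((n:ℂ) + 1) + (1 - (γ:ℂ))) := by
      rw [hG, mul_div_cancel_left₀ _ hg3ne]
    rw [this, hg1, hg2, hg3]
    push_cast
    ring
  apply Complex.ofReal_injective
  rw [key, hbeta]
  push_cast
  ring

lemma rpow_int {γ t : ℝ} (hγ1 : γ < 1) (ht : 0 < t) :
    IntervalIntegrable (fun τ : ℝ => (t - τ) ^ (-γ)) volume 0 t := by
  have h := (intervalIntegral.intervalIntegrable_rpow' (a := t) (b := (0:ℝ)) (r := -γ)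
    (by linarith)).comp_sub_left t
  simpa using h

lemma mono_int {γ t : ℝ} (hγ1 : γ < 1) (ht : 0 < t) (n : ℕ) :
    IntervalIntegrable (fun τ : ℝ => τ ^ n * (t - τ) ^ (-γ)) volume 0 t :=
  (rpow_int hγ1 ht).continuousOn_mul (continuous_pow n).continuousOn

lemma part2 {γ t : ℝ} (hγ0 : 0 < γ) (hγ1 : γ < 1) (ht : 0 < t) :
    (1 / Real.Gamma (1 - γ)) * (∫ τ in (0:ℝ)..t, π * Real.cos (π * τ) * (t - τ) ^ (-γ))
      = π * t ^ (1 - γ) *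
          ∑' m : ℕ, (-1 : ℝ) ^ m * (π * t) ^ (2 * m) / Real.Gamma (2 * m + 2 - γ) := by
  have hG1 : 0 < Real.Gamma (1 - γ) := Real.Gamma_pos_of_pos (by linarith)
  set c : ℕ → ℝ := fun m => (-1) ^ m * π ^ (2 * m + 1) / (2 * m).factorial with hc
  set F : ℕ → ℝ → ℝ := fun m τ => c m * (τ ^ (2 * m) * (t - τ) ^ (-γ)) with hF
  -- Gamma facts
  have hGm : ∀ m : ℕ, 0 < Real.Gamma (2 * (m:ℝ) + 2 - γ) := by
    intro m
    apply Real.Gamma_pos_of_pos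
    have : (0:ℝ) ≤ (m:ℝ) := Nat.cast_nonneg m
    linarith
  -- pointwise identity
  have hpt : ∀ τ : ℝ, π * Real.cos (π * τ) * (t - τ) ^ (-γ) = ∑' m, F m τ := by
    intro τ
    rw [Real.cos_eq_tsum (π * τ)]
    calc π * (∑' m : ℕ, (-1)^m * (π*τ)^(2*m) / (2*m).factorial) * (t - τ)^(-γ)
        = (∑' m : ℕ, (-1)^m * (π*τ)^(2*m) / (2*m).factorial) * (π * (t - τ)^(-γ)) := by ring
      _ = ∑' m : ℕ, (-1)^m * (π*τ)^(2*m) / (2*m).factorial * (π * (t - τ)^(-γ)) :=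
          tsum_mul_right.symm
      _ = ∑' m, F m τ := by
          apply tsum_congr
          intro m
          simp only [hF, hc]
          rw [mul_pow]
          ring
  -- integrability
  have hFint : ∀ m : ℕ, IntegrableOn (F m) (Set.Ioc 0 t) volume := by
    intro m
    exact (((mono_int hγ1 ht (2*m)).const_mul (c m))).1
  -- value of each integral
  have hval : ∀ m : ℕ, ∫ τ in (0:ℝ)..t, F m τ
      = Real.Gamma (1 - γ) * (π * t ^ (1 - γ)) *
        ((-1)^m * (π*t)^(2*m) / Real.Gamma (2 * (m:ℝ) + 2 - γ)) := by
    intro m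
    rw [hF]
    simp only
    rw [intervalIntegral.integral_const_mul, beta_int hγ0 hγ1 ht (2*m)]
    have ht1 : t ^ (((2*m : ℕ):ℝ) + 1 - γ) = t ^ (2*m) * t ^ (1 - γ) := by
      rw [show ((2*m : ℕ):ℝ) + 1 - γ = ((2*m : ℕ):ℝ) + (1 - γ) by ring,
        Real.rpow_add ht, Real.rpow_natCast]
    rw [ht1]
    have hfac : ((2*m).factorial : ℝ) ≠ 0 := by positivity
    have hgm := (hGm m).ne'
    rw [show ((2*m : ℕ):ℝ) + 2 - γ = 2 * (m:ℝ) + 2 - γ by push_cast; ring]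
    simp only [hc]
    rw [mul_pow]
    field_simp
    ring
  -- norm integrals
  have hnormval : ∀ m : ℕ, ∫ τ in Set.Ioc (0:ℝ) t, ‖F m τ‖
      = |c m| * ∫ τ in (0:ℝ)..t, τ ^ (2*m) * (t - τ) ^ (-γ) := by
    intro m
    rw [intervalIntegral.integral_of_le ht.le, ← integral_const_mul]
    apply setIntegral_congr_fun measurableSet_Ioc
    intro τ hτ
    obtain ⟨h0, h1⟩ := hτ
    have h2 : (0:ℝ) ≤ t - τ := by linarith
    simp only [hF, Real.norm_eq_abs, abs_mul]
    congr 1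
    rw [abs_of_nonneg (by positivity : (0:ℝ) ≤ τ ^ (2*m)), abs_of_nonneg (Real.rpow_nonneg h2 _)]
  have hnorm_sum : Summable (fun m : ℕ => ∫ τ in Set.Ioc (0:ℝ) t, ‖F m τ‖) := by
    have hs := (summable_main γ (π*t) hγ1).mul_left (Real.Gamma (1-γ) * (π * t ^ (1-γ)))
    apply hs.congr
    intro m
    rw [hnormval m, beta_int hγ0 hγ1 ht (2*m)]
    have ht1 : t ^ (((2*m : ℕ):ℝ) + 1 - γ) = t ^ (2*m) * t ^ (1 - γ) := by
      rw [show ((2*m : ℕ):ℝ) + 1 - γ = ((2*m : ℕ):ℝ) + (1 - γ) by ring,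
        Real.rpow_add ht, Real.rpow_natCast]
    rw [ht1, show ((2*m : ℕ):ℝ) + 2 - γ = 2 * (m:ℝ) + 2 - γ by push_cast; ring]
    have hfac : ((2*m).factorial : ℝ) ≠ 0 := by positivity
    have hgm := (hGm m)
    have habs : |(-1 : ℝ) ^ m * (π*t) ^ (2 * m) / Real.Gamma (2 * (m:ℝ) + 2 - γ)|
        = (π*t) ^ (2*m) / Real.Gamma (2 * (m:ℝ) + 2 - γ) := by
      rw [abs_div, abs_mul, abs_pow, abs_pow, abs_neg, abs_one, one_pow, one_mul,
        abs_of_pos hgm, abs_of_pos (by positivity : (0:ℝ) < π * t)]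
    rw [habs]
    simp only [hc]
    rw [abs_div, abs_mul, abs_pow, abs_pow, abs_neg, abs_one, one_pow, one_mul,
      abs_of_pos Real.pi_pos, abs_of_pos (by positivity : (0:ℝ) < ((2*m).factorial : ℝ)),
      mul_pow]
    field_simp
    ring
  -- the swap
  have hswap := MeasureTheory.integral_tsum_of_summable_integral_norm
    (μ := volume.restrict (Set.Ioc (0:ℝ) t)) (F := F) hFint hnorm_sum
  have hmain : ∫ τ in (0:ℝ)..t, π * Real.cos (π * τ) * (t - τ) ^ (-γ)
      = ∑' m : ℕ, ∫ τ in (0:ℝ)..t, F m τ := by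
    rw [intervalIntegral.integral_of_le ht.le]
    rw [show (fun τ => π * Real.cos (π * τ) * (t - τ) ^ (-γ)) = fun τ => ∑' m, F m τ from
      funext hpt]
    rw [← hswap]
    apply tsum_congr
    intro m
    rw [intervalIntegral.integral_of_le ht.le]
  rw [hmain]
  have : ∀ m : ℕ, ∫ τ in (0:ℝ)..t, F m τ
      = (Real.Gamma (1 - γ) * (π * t ^ (1 - γ))) *
        ((-1)^m * (π*t)^(2*m) / Real.Gamma (2 * (m:ℝ) + 2 - γ)) := hval
  rw [tsum_congr this, tsum_mul_left]
  field_simp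

lemma part3 {γ t : ℝ} (hγ0 : 0 < γ) (hγ1 : γ < 1) (ht : 0 < t) :
    ((π * t ^ (1 - γ) : ℝ) : ℂ) / (2 * Complex.Gamma (2 - γ)) *
        (kummer 1 (2 - γ) ((π : ℂ) * t * Complex.I)
          + kummer 1 (2 - γ) (-((π : ℂ) * t * Complex.I)))
      = ((π * t ^ (1 - γ) *
          ∑' m : ℕ, (-1 : ℝ) ^ m * (π * t) ^ (2 * m) / Real.Gamma (2 * m + 2 - γ) : ℝ) : ℂ) := by
  have hG0 : 0 < Real.Gamma (2 - γ) := Real.Gamma_pos_of_pos (by linarith)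
  set b : ℂ := 2 - (γ:ℂ) with hbdef
  have hb : ∀ k : ℕ, Complex.Gamma (b + k) = ((Real.Gamma (2 - γ + k) : ℝ) : ℂ) := by
    intro k
    rw [show b + (k:ℂ) = (((2 - γ + k : ℝ)) : ℂ) by rw [hbdef]; push_cast; ring,
      Complex.Gamma_ofReal]
  have hGk : ∀ k : ℕ, 0 < Real.Gamma (2 - γ + k) := by
    intro k
    apply Real.Gamma_pos_of_pos
    have : (0:ℝ) ≤ (k:ℝ) := Nat.cast_nonneg k
    linarith
  have hGkne : ∀ k : ℕ, Complex.Gamma (b + k) ≠ 0 := by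
    intro k; rw [hb k]; exact_mod_cast (hGk k).ne'
  -- kummer in simplified form
  have kummer_eq : ∀ z : ℂ, kummer 1 b z = Complex.Gamma b * ∑' k : ℕ, z ^ k / Complex.Gamma (b + k) := by
    intro z
    rw [kummer, Complex.Gamma_one, div_one]
    congr 1
    apply tsum_congr
    intro k
    have h1 : Complex.Gamma (1 + (k:ℂ)) = (k.factorial : ℂ) := by
      rw [add_comm, Complex.Gamma_nat_eq_factorial]
    have hkne : (k.factorial : ℂ) ≠ 0 := by exact_mod_cast k.factorial_ne_zero
    rw [h1, mul_comm (Complex.Gamma (b + (k:ℂ))) ((k.factorial : ℂ)), ← div_div,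
      div_self hkne, one_div, div_eq_mul_inv (z ^ k), mul_comm (z ^ k)]
  -- summability
  have hsummable : ∀ z : ℂ, Summable (fun k : ℕ => z ^ k / Complex.Gamma (b + k)) := by
    intro z
    apply Summable.of_norm
    have hle : ∀ k : ℕ, ‖z ^ k / Complex.Gamma (b + k)‖
        ≤ (1 / Real.Gamma (2 - γ)) * (‖z‖ ^ k / k.factorial) := by
      intro k
      rw [norm_div, norm_pow, hb k, Complex.norm_real, Real.norm_eq_abs, abs_of_pos (hGk k)]
      have hfac : Real.Gamma (2 - γ) * (k.factorial : ℝ) ≤ Real.Gamma (2 - γ + k) :=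
        gamma_fac_le (by linarith) k
      have h1 : ‖z‖ ^ k / Real.Gamma (2 - γ + k) ≤ ‖z‖ ^ k / (Real.Gamma (2 - γ) * k.factorial) :=
        div_le_div_of_nonneg_left (by positivity) (by positivity) hfac
      calc ‖z‖ ^ k / Real.Gamma (2 - γ + k) ≤ ‖z‖ ^ k / (Real.Gamma (2 - γ) * k.factorial) := h1
        _ = (1 / Real.Gamma (2 - γ)) * (‖z‖ ^ k / k.factorial) := by field_simp
    apply Summable.of_nonneg_of_le (fun k => norm_nonneg _) hle
    exact ((Real.summable_pow_div_factorial ‖z‖).mul_left _)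
  set z : ℂ := (π : ℂ) * t * Complex.I with hzdef
  have hcomb : kummer 1 b z + kummer 1 b (-z)
      = Complex.Gamma b * ∑' k : ℕ, (z ^ k + (-z) ^ k) / Complex.Gamma (b + k) := by
    rw [kummer_eq z, kummer_eq (-z), ← mul_add, ← Summable.tsum_add (hsummable z) (hsummable (-z))]
    congr 1
    apply tsum_congr
    intro k
    rw [← add_div]
  set f : ℕ → ℂ := fun k => (z ^ k + (-z) ^ k) / Complex.Gamma (b + k) with hfdef
  have hodd : ∀ k : ℕ, f (2 * k + 1) = 0 := by
    intro k
    have : (-z) ^ (2 * k + 1) = -(z ^ (2 * k + 1)) := Odd.neg_pow ⟨k, by ring⟩ z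
    simp [hfdef, this]
  have heven : ∀ m : ℕ, f (2 * m)
      = ((2 * ((-1 : ℝ) ^ m * (π * t) ^ (2 * m) / Real.Gamma (2 * m + 2 - γ)) : ℝ) : ℂ) := by
    intro m
    have hnegpow : (-z) ^ (2 * m) = z ^ (2 * m) := Even.neg_pow ⟨m, by ring⟩ z
    have hz2 : z ^ 2 = ((-( (π * t) ^ 2) : ℝ) : ℂ) := by
      rw [hzdef]
      push_cast
      rw [mul_pow, mul_pow, Complex.I_sq]
      ring
    have hzpow : z ^ (2 * m) = (((-1 : ℝ) ^ m * (π * t) ^ (2 * m) : ℝ) : ℂ) := by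
      rw [pow_mul, hz2]
      push_cast
      rw [neg_pow, ← pow_mul]
    rw [hfdef]
    simp only
    rw [hnegpow, hzpow, hb (2 * m),
      show (2 - γ + (2 * m : ℕ) : ℝ) = 2 * (m:ℝ) + 2 - γ by push_cast; ring]
    push_cast
    ring
  have hS := (summable_main γ (π * t) hγ1).of_abs
  have he : Summable (fun m : ℕ => f (2 * m)) := by
    rw [show (fun m : ℕ => f (2 * m)) = fun m : ℕ =>
      ((2 * ((-1 : ℝ) ^ m * (π * t) ^ (2 * m) / Real.Gamma (2 * m + 2 - γ)) : ℝ) : ℂ) from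
      funext heven]
    rw [Complex.summable_ofReal]
    exact hS.mul_left 2
  have ho : Summable (fun m : ℕ => f (2 * m + 1)) := by
    rw [show (fun m : ℕ => f (2 * m + 1)) = fun _ : ℕ => (0:ℂ) from funext hodd]
    exact summable_zero
  have htsum : ∑' k, f k = ∑' m : ℕ, f (2 * m) := by
    rw [← tsum_even_add_odd he ho]
    simp [hodd]
  have hsum_eval : ∑' k, f k
      = ((2 * ∑' m : ℕ, (-1 : ℝ) ^ m * (π * t) ^ (2 * m) / Real.Gamma (2 * m + 2 - γ) : ℝ) : ℂ) := by
    rw [htsum, tsum_congr heven, ← Complex.ofReal_tsum, tsum_mul_left]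
  have hGb : Complex.Gamma b = ((Real.Gamma (2 - γ) : ℝ) : ℂ) := by
    rw [show b = (((2 - γ : ℝ)) : ℂ) by rw [hbdef]; push_cast; ring, Complex.Gamma_ofReal]
  rw [show ((2:ℂ) - ↑γ) = b from rfl] at *
  rw [hcomb, hsum_eval, hGb]
  have hGne : ((Real.Gamma (2 - γ) : ℝ) : ℂ) ≠ 0 := by exact_mod_cast hG0.ne'
  push_cast
  field_simp

/-- The Caputo fractional derivative of order γ of sin(πt) is given by an
absolutely convergent power series, which equals
(π t^{1−γ} / (2Γ(2−γ))) (₁F₁(1, 2−γ, iπt) + ₁F₁(1, 2−γ, −iπt)). -/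
theorem caputo_deriv_sin_pi (γ t : ℝ) (hγ0 : 0 < γ) (hγ1 : γ < 1) (ht : 0 < t) :
    Summable (fun m : ℕ => |(-1 : ℝ) ^ m * (π * t) ^ (2 * m) / Real.Gamma (2 * m + 2 - γ)|) ∧
    (1 / Real.Gamma (1 - γ)) * (∫ τ in (0:ℝ)..t, π * Real.cos (π * τ) * (t - τ) ^ (-γ))
      = π * t ^ (1 - γ) *
          ∑' m : ℕ, (-1 : ℝ) ^ m * (π * t) ^ (2 * m) / Real.Gamma (2 * m + 2 - γ) ∧
    ((π * t ^ (1 - γ) : ℝ) : ℂ) / (2 * Complex.Gamma (2 - γ)) *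
        (kummer 1 (2 - γ) ((π : ℂ) * t * Complex.I)
          + kummer 1 (2 - γ) (-((π : ℂ) * t * Complex.I)))
      = ((π * t ^ (1 - γ) *
          ∑' m : ℕ, (-1 : ℝ) ^ m * (π * t) ^ (2 * m) / Real.Gamma (2 * m + 2 - γ) : ℝ) : ℂ) := by
  exact ⟨summable_main γ (π * t) hγ1, part2 hγ0 hγ1 ht, part3 hγ0 hγ1 ht⟩
end
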